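/- Let Q be a finite faithful quandle and let α be a minimal congruence of Q. Then the center Z(Dis^α) is nontrivial if and only if there is a prime p such that Dis^α is a p-group of nilpotency class at most 2. -/

import Mathlib

/-- A quandle structure on `Q`, given by its left translations: each `L x` is a
permutation of `Q`, `x * x = x`, and `x * (y * z) = (x * y) * (x * z)`
(writing `x * y` for `L x y`). -/
structure QuandleStr (Q : Type*) where
  L : Q → Equiv.Perm Q
  idem : ∀ x : Q, L x x = x
  selfDistrib : ∀ x y z : Q, L x (L y z) = L (L x y) (L x z)

namespace QuandleStr

variable {Q : Type*} (S : QuandleStr Q)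

/-- The left multiplication group `LMlt(Q)`, generated by all left translations. -/
def Lmlt : Subgroup (Equiv.Perm Q) :=
  Subgroup.closure (Set.range S.L)

/-- The displacement group `Dis(Q)`, generated by all `L x * (L y)⁻¹`. -/
def Dis : Subgroup (Equiv.Perm Q) :=
  Subgroup.closure {g : Equiv.Perm Q | ∃ x y : Q, g = S.L x * (S.L y)⁻¹}

/-- A congruence of the quandle: an equivalence relation compatible with `*` and `\`. -/
def IsCong (θ : Setoid Q) : Prop :=
  ∀ x y u v : Q, θ.r x y → θ.r u v →
    θ.r (S.L x u) (S.L y v) ∧ θ.r ((S.L x)⁻¹ u) ((S.L y)⁻¹ v)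

/-- A quandle is faithful if `x ↦ L x` is injective. -/
def Faithful : Prop := Function.Injective S.L

/-- A quandle is connected if `LMlt(Q)` acts transitively. -/
def Connected : Prop := ∀ x y : Q, ∃ g ∈ S.Lmlt, g x = y

/-- A quandle is latin if all right translations are bijective. -/
def Latin : Prop := ∀ y : Q, Function.Bijective fun x : Q => S.L x y

/-- `θ` is a minimal congruence: not equality, and the only congruence strictly
contained in it is equality. -/
def IsMinCong (θ : Setoid Q) : Prop :=
  S.IsCong θ ∧ θ ≠ ⊥ ∧ ∀ β : Setoid Q, S.IsCong β → β < θ → β = ⊥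

/-- `θ` is a maximal congruence: not the all relation, and the only congruence strictly
containing it is the all relation. -/
def IsMaxCong (θ : Setoid Q) : Prop :=
  S.IsCong θ ∧ θ ≠ ⊤ ∧ ∀ β : Setoid Q, S.IsCong β → θ < β → β = ⊤

/-- `Dis_α`: the subgroup generated by the `L x * (L y)⁻¹` with `x α y`. -/
def DisC (r : Q → Q → Prop) : Subgroup (Equiv.Perm Q) :=
  Subgroup.closure {g : Equiv.Perm Q | ∃ x y : Q, r x y ∧ g = S.L x * (S.L y)⁻¹}

/-- `Dis^α`: the elements of `Dis(Q)` displacing every point inside its `α`-class. -/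
def DisUp (θ : Setoid Q) : Subgroup (Equiv.Perm Q) where
  carrier := {g : Equiv.Perm Q | g ∈ S.Dis ∧ ∀ x : Q, θ.r (g x) x}
  one_mem' := ⟨S.Dis.one_mem, fun x => θ.iseqv.refl x⟩
  mul_mem' := by
    rintro a b ⟨ha, ha2⟩ ⟨hb, hb2⟩
    refine ⟨S.Dis.mul_mem ha hb, fun x => ?_⟩
    rw [Equiv.Perm.mul_apply]
    exact θ.iseqv.trans (ha2 (b x)) (hb2 x)
  inv_mem' := by
    rintro a ⟨ha, ha2⟩
    refine ⟨S.Dis.inv_mem ha, fun x => ?_⟩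
    have h := ha2 (a⁻¹ x)
    rw [show a (a⁻¹ x) = x from by simp] at h
    exact θ.iseqv.symm h

end QuandleStr

/-- The orbit equivalence relation of a subgroup of permutations. -/
def orbSetoid {Q : Type*} (N : Subgroup (Equiv.Perm Q)) : Setoid Q where
  r x y := ∃ n ∈ N, n x = y
  iseqv := by
    refine ⟨fun x => ⟨1, N.one_mem, rfl⟩, ?_, ?_⟩
    · rintro x y ⟨n, hn, rfl⟩
      exact ⟨n⁻¹, N.inv_mem hn, by simp⟩
    · rintro x y z ⟨n, hn, rfl⟩ ⟨m, hm, rfl⟩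
      exact ⟨m * n, N.mul_mem hm hn, Equiv.Perm.mul_apply m n x⟩


namespace QuandleStr
variable {Q : Type*} (S : QuandleStr Q)

lemma L_mem_Lmlt (x : Q) : S.L x ∈ S.Lmlt := Subgroup.subset_closure ⟨x, rfl⟩

lemma conj_L' {g : Equiv.Perm Q} (hg : g ∈ S.Lmlt) :
    ∀ x : Q, g * S.L x * g⁻¹ = S.L (g x) := by
  induction hg using Subgroup.closure_induction with
  | mem z hz =>
    obtain ⟨w, rfl⟩ := hz
    intro x
    have h : S.L w * S.L x = S.L (S.L w x) * S.L w := by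
      ext t; simpa [Equiv.Perm.mul_apply] using S.selfDistrib w x t
    rw [h]; group
  | one => simp
  | mul a b ha hb iha ihb =>
    intro x
    have : a * b * S.L x * (a * b)⁻¹ = a * (b * S.L x * b⁻¹) * a⁻¹ := by group
    rw [this, ihb, iha]; simp [Equiv.Perm.mul_apply]
  | inv a ha iha =>
    intro x
    have h := iha (a⁻¹ x)
    have : S.L x = a * S.L (a⁻¹ x) * a⁻¹ := by
      rw [h]; simp
    rw [this]; group

lemma conj_L {g : Equiv.Perm Q} (hg : g ∈ S.Lmlt) (x : Q) :
    g * S.L x * g⁻¹ = S.L (g x) := S.conj_L' hg x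

lemma cong_invariant {α : Setoid Q} (hc : S.IsCong α) {g : Equiv.Perm Q}
    (hg : g ∈ S.Lmlt) : ∀ x y : Q, α.r x y → α.r (g x) (g y) := by
  have key : ∀ g, g ∈ S.Lmlt → ((∀ x y : Q, α.r x y → α.r (g x) (g y)) ∧
      (∀ x y : Q, α.r x y → α.r (g⁻¹ x) (g⁻¹ y))) := by
    intro g hg
    induction hg using Subgroup.closure_induction with
    | mem z hz =>
      obtain ⟨w, rfl⟩ := hz
      constructor
      · intro x y h; exact (hc w w x y (α.refl w) h).1
      · intro x y h; exact (hc w w x y (α.refl w) h).2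
    | one => simp only [Equiv.Perm.coe_one, id_eq, inv_one]; exact ⟨fun _ _ h => h, fun _ _ h => h⟩
    | mul a b ha hb iha ihb =>
      constructor
      · intro x y h
        simpa [Equiv.Perm.mul_apply] using iha.1 _ _ (ihb.1 x y h)
      · intro x y h
        have : (a * b)⁻¹ = b⁻¹ * a⁻¹ := by group
        rw [this]
        simpa [Equiv.Perm.mul_apply] using ihb.2 _ _ (iha.2 x y h)
    | inv a ha iha =>
      exact ⟨iha.2, by simpa using iha.1⟩
  exact (key g hg).1

lemma Dis_le_Lmlt : S.Dis ≤ S.Lmlt := by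
  rw [Dis, Subgroup.closure_le]
  rintro g ⟨x, y, rfl⟩
  exact mul_mem (S.L_mem_Lmlt x) (inv_mem (S.L_mem_Lmlt y))

lemma Dis_conj {g h : Equiv.Perm Q} (hg : g ∈ S.Lmlt) (hh : h ∈ S.Dis) :
    g * h * g⁻¹ ∈ S.Dis := by
  induction hh using Subgroup.closure_induction with
  | mem z hz =>
    obtain ⟨x, y, rfl⟩ := hz
    have : g * (S.L x * (S.L y)⁻¹) * g⁻¹
        = (g * S.L x * g⁻¹) * (g * S.L y * g⁻¹)⁻¹ := by group
    rw [this, S.conj_L hg, S.conj_L hg]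
    exact Subgroup.subset_closure ⟨g x, g y, rfl⟩
  | one => simpa using S.Dis.one_mem
  | mul a b ha hb iha ihb =>
    have : g * (a * b) * g⁻¹ = (g * a * g⁻¹) * (g * b * g⁻¹) := by group
    rw [this]; exact mul_mem iha ihb
  | inv a ha iha =>
    have : g * a⁻¹ * g⁻¹ = (g * a * g⁻¹)⁻¹ := by group
    rw [this]; exact inv_mem iha


lemma DisUp_conj {α : Setoid Q} (hc : S.IsCong α) {g h : Equiv.Perm Q}
    (hg : g ∈ S.Lmlt) (hh : h ∈ S.DisUp α) : g * h * g⁻¹ ∈ S.DisUp α := by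
  refine ⟨S.Dis_conj hg hh.1, fun x => ?_⟩
  have h1 : α.r (h (g⁻¹ x)) (g⁻¹ x) := hh.2 (g⁻¹ x)
  have h2 := S.cong_invariant hc hg _ _ h1
  simpa [Equiv.Perm.mul_apply] using h2

/-- Orbit setoid of an `LMlt`-invariant subgroup is a congruence. -/
lemma orb_cong {α : Setoid Q} (hc : S.IsCong α) (N : Subgroup (Equiv.Perm Q))
    (hNle : N ≤ S.Lmlt)
    (hconj : ∀ g ∈ S.Lmlt, ∀ n ∈ N, g * n * g⁻¹ ∈ N) :
    S.IsCong (orbSetoid N) := by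
  rintro x y u v ⟨n, hn, rfl⟩ ⟨m, hm, rfl⟩
  have hLy : S.L (n x) = n * S.L x * n⁻¹ := (S.conj_L (hNle hn) x).symm
  constructor
  · refine ⟨n * (S.L x * (n⁻¹ * m) * (S.L x)⁻¹), ?_, ?_⟩
    · exact mul_mem hn (hconj _ (S.L_mem_Lmlt x) _ (mul_mem (inv_mem hn) hm))
    · rw [hLy]; simp [Equiv.Perm.mul_apply]
  · refine ⟨n * ((S.L x)⁻¹ * (n⁻¹ * m) * S.L x), ?_, ?_⟩
    · exact mul_mem hn (hconj _ (inv_mem (S.L_mem_Lmlt x)) _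
        (by simpa using mul_mem (inv_mem hn) hm))
    · rw [hLy]; simp [Equiv.Perm.mul_apply]

end QuandleStr

private lemma app_comm {Q : Type*} (f g : Equiv.Perm Q) (hfg : f * g = g * f) (w : Q) :
    f (g w) = g (f w) := by
  have := congrArg (fun (e : Equiv.Perm Q) => e w) hfg
  simpa [Equiv.Perm.mul_apply] using this

theorem stmt3 {Q : Type*} [Finite Q] (S : QuandleStr Q) (hfaith : S.Faithful)
    (α : Setoid Q) (hmin : S.IsMinCong α) :
    Subgroup.center ↥(S.DisUp α) ≠ ⊥ ↔
      ∃ p : ℕ, p.Prime ∧ IsPGroup p ↥(S.DisUp α) ∧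
        commutator ↥(S.DisUp α) ≤ Subgroup.center ↥(S.DisUp α) := by
  obtain ⟨hcong, hne, hminim⟩ := hmin
  have hpair : ∃ x y : Q, x ≠ y ∧ α.r x y := by
    by_contra hcon
    push_neg at hcon
    apply hne
    ext a b
    show α.r a b ↔ a = b
    constructor
    · intro h
      by_contra hab
      exact hcon a b hab h
    · rintro rfl; exact α.refl a
  obtain ⟨x0, y0, hxy0ne, hxy0⟩ := hpair
  set g0 : Equiv.Perm Q := S.L x0 * (S.L y0)⁻¹ with hg0
  have hg0mem : g0 ∈ S.DisUp α := by
    refine ⟨Subgroup.subset_closure ⟨x0, y0, rfl⟩, fun z => ?_⟩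
    have h := (hcong x0 y0 ((S.L y0)⁻¹ z) ((S.L y0)⁻¹ z) hxy0 (α.refl _)).1
    simpa [hg0, Equiv.Perm.mul_apply] using h
  have hg0ne : g0 ≠ 1 := by
    intro h
    rw [hg0, mul_inv_eq_one] at h
    exact hxy0ne (hfaith h)
  haveI : Nontrivial ↥(S.DisUp α) :=
    ⟨⟨g0, hg0mem⟩, 1, fun h => hg0ne (by simpa using congrArg Subtype.val h)⟩
  constructor
  · -- hard direction
    intro hZ
    haveI : Nontrivial ↥(Subgroup.center ↥(S.DisUp α)) :=
      (Subgroup.nontrivial_iff_ne_bot _).mpr hZ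
    obtain ⟨ζ, hζne⟩ := exists_ne (1 : ↥(Subgroup.center ↥(S.DisUp α)))
    set z : Equiv.Perm Q := ((ζ : ↥(S.DisUp α)) : Equiv.Perm Q) with hzdef
    have hzmem : z ∈ S.DisUp α := (ζ : ↥(S.DisUp α)).2
    have hzcomm : ∀ h ∈ S.DisUp α, z * h = h * z := by
      intro h hh
      have := (Subgroup.mem_center_iff.mp ζ.2) ⟨h, hh⟩
      exact (congrArg Subtype.val this).symm
    have hzne1 : z ≠ 1 := by
      intro h
      exact hζne (Subtype.ext (Subtype.ext h))
    set Zc : Subgroup (Equiv.Perm Q) :=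
      { carrier := {n | n ∈ S.DisUp α ∧ ∀ h ∈ S.DisUp α, n * h = h * n}
        one_mem' := ⟨(S.DisUp α).one_mem, by simp⟩
        mul_mem' := by
          rintro a b ⟨ha1, ha2⟩ ⟨hb1, hb2⟩
          refine ⟨(S.DisUp α).mul_mem ha1 hb1, fun h hh => ?_⟩
          rw [mul_assoc, hb2 h hh, ← mul_assoc, ha2 h hh, mul_assoc]
        inv_mem' := by
          rintro a ⟨ha1, ha2⟩
          refine ⟨(S.DisUp α).inv_mem ha1, fun h hh => ?_⟩
          have c : Commute a h := ha2 h hh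
          exact c.inv_left } with hZcdef
    have hzZc : z ∈ Zc := ⟨hzmem, hzcomm⟩
    have hZconj : ∀ g ∈ S.Lmlt, ∀ n ∈ Zc, g * n * g⁻¹ ∈ Zc := by
      intro g hg n hn
      refine ⟨S.DisUp_conj hcong hg hn.1, fun h hh => ?_⟩
      have hh' : g⁻¹ * h * g ∈ S.DisUp α := by
        simpa using S.DisUp_conj hcong (inv_mem hg) hh
      have h1 := hn.2 _ hh'
      have h2 := congrArg (fun w => g * w * g⁻¹) h1
      simp only [mul_assoc] at h2 ⊢
      simpa [inv_mul_cancel_left, mul_inv_cancel_left, mul_assoc] using h2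
    have orbit_eq : ∀ N : Subgroup (Equiv.Perm Q), (∀ n ∈ N, n ∈ S.DisUp α) →
        (∀ g ∈ S.Lmlt, ∀ n ∈ N, g * n * g⁻¹ ∈ N) → N ≠ ⊥ →
        ∀ x y : Q, α.r x y → ∃ n ∈ N, n x = y := by
      intro N hle hconjN hNbot
      have hcg : S.IsCong (orbSetoid N) :=
        S.orb_cong hcong N (fun n hn => S.Dis_le_Lmlt (hle n hn).1) hconjN
      have hle' : orbSetoid N ≤ α := by
        rw [Setoid.le_def]
        rintro x y ⟨n, hn, rfl⟩
        exact α.symm ((hle n hn).2 x)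
      have heq : orbSetoid N = α := by
        by_contra hne2
        have hbot : orbSetoid N = ⊥ := hminim _ hcg (lt_of_le_of_ne hle' hne2)
        haveI : Nontrivial ↥N := (Subgroup.nontrivial_iff_ne_bot _).mpr hNbot
        obtain ⟨n, hnne⟩ := exists_ne (1 : ↥N)
        have hex : ∃ x : Q, (n : Equiv.Perm Q) x ≠ x := by
          by_contra hfix
          push_neg at hfix
          exact hnne (Subtype.ext (Equiv.ext hfix))
        obtain ⟨x, hx⟩ := hex
        have hrel : (orbSetoid N).r x ((n : Equiv.Perm Q) x) := ⟨n, n.2, rfl⟩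
        rw [hbot] at hrel
        exact hx hrel.symm
      intro x y h
      rw [← heq] at h
      exact h
    have hZcbot : Zc ≠ ⊥ := by
      intro hbot
      rw [hbot] at hzZc
      exact hzne1 (Subgroup.mem_bot.mp hzZc)
    have horb := orbit_eq Zc (fun n hn => hn.1) hZconj hZcbot
    -- Dis^α is abelian
    have habel : ∀ h ∈ S.DisUp α, ∀ k ∈ S.DisUp α, h * k = k * h := by
      intro h hh k hk
      ext w
      show h (k w) = k (h w)
      obtain ⟨a, ha, hax⟩ := horb w (h w) (α.symm (hh.2 w))
      obtain ⟨b, hb, hbx⟩ := horb w (k w) (α.symm (hk.2 w))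
      calc h (k w) = h (b w) := by rw [hbx]
        _ = b (h w) := (app_comm b h (hb.2 h hh) w).symm
        _ = b (a w) := by rw [hax]
        _ = a (b w) := (app_comm a b (ha.2 b hb.1) w).symm
        _ = a (k w) := by rw [hbx]
        _ = k (a w) := app_comm a k (ha.2 k hk) w
        _ = k (h w) := by rw [hax]
    have hcenter : Subgroup.center ↥(S.DisUp α) = ⊤ := by
      rw [Subgroup.eq_top_iff']
      intro a
      rw [Subgroup.mem_center_iff]
      intro b
      exact Subtype.ext (habel (b : Equiv.Perm Q) b.2 (a : Equiv.Perm Q) a.2)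
    -- pick the prime
    have hcard1 : Nat.card ↥(S.DisUp α) ≠ 1 := by
      have := Finite.one_lt_card (α := ↥(S.DisUp α))
      omega
    obtain ⟨p, hp, hdvd⟩ := Nat.exists_prime_and_dvd hcard1
    haveI : Fact p.Prime := ⟨hp⟩
    haveI : Fintype ↥(S.DisUp α) := Fintype.ofFinite _
    rw [Nat.card_eq_fintype_card] at hdvd
    obtain ⟨gp, hgp⟩ := exists_prime_orderOf_dvd_card p hdvd
    -- the p-torsion subgroup
    set T : Subgroup (Equiv.Perm Q) :=
      { carrier := {h | h ∈ S.DisUp α ∧ h ^ p = 1}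
        one_mem' := ⟨(S.DisUp α).one_mem, one_pow p⟩
        mul_mem' := by
          rintro a b ⟨ha1, ha2⟩ ⟨hb1, hb2⟩
          refine ⟨(S.DisUp α).mul_mem ha1 hb1, ?_⟩
          have c : Commute a b := habel a ha1 b hb1
          rw [c.mul_pow, ha2, hb2, one_mul]
        inv_mem' := by
          rintro a ⟨ha1, ha2⟩
          exact ⟨(S.DisUp α).inv_mem ha1, by rw [inv_pow, ha2, inv_one]⟩ } with hTdef
    have hgpT : (gp : Equiv.Perm Q) ∈ T := by
      refine ⟨gp.2, ?_⟩
      have h1 : gp ^ p = 1 := by rw [← hgp]; exact pow_orderOf_eq_one gp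
      have := congrArg Subtype.val h1
      simpa using this
    have hgpne : (gp : Equiv.Perm Q) ≠ 1 := by
      intro h
      have : gp = 1 := Subtype.ext (by simpa using h)
      rw [this] at hgp
      simp at hgp
      exact hp.ne_one hgp.symm
    have hTconj : ∀ g ∈ S.Lmlt, ∀ t ∈ T, g * t * g⁻¹ ∈ T := by
      intro g hg t ht
      refine ⟨S.DisUp_conj hcong hg ht.1, ?_⟩
      rw [conj_pow, ht.2, mul_one, mul_inv_cancel]
    have hTbot : T ≠ ⊥ := by
      intro hbot
      rw [hbot] at hgpT
      exact hgpne (Subgroup.mem_bot.mp hgpT)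
    have horbT := orbit_eq T (fun n hn => hn.1) hTconj hTbot
    -- exponent p
    have hexp : ∀ h ∈ S.DisUp α, h ^ p = 1 := by
      intro h hh
      ext x
      show (h ^ p) x = x
      obtain ⟨t, htT, htx⟩ := horbT x (h x) (α.symm (hh.2 x))
      have hcomm : h * t = t * h := habel h hh t htT.1
      have key : ∀ n : ℕ, (h ^ n) x = (t ^ n) x := by
        intro n
        induction n with
        | zero => simp
        | succ n ih =>
          have c' : (h ^ n) * t = t * (h ^ n) := Commute.pow_left hcomm n
          calc (h ^ (n+1)) x = (h ^ n) (h x) := by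
                rw [pow_succ]; simp [Equiv.Perm.mul_apply]
            _ = (h ^ n) (t x) := by rw [htx]
            _ = t ((h ^ n) x) := app_comm (h ^ n) t c' x
            _ = t ((t ^ n) x) := by rw [ih]
            _ = (t ^ (n+1)) x := by rw [pow_succ']; simp [Equiv.Perm.mul_apply]
      rw [key p, htT.2]
      simp
    refine ⟨p, hp, ?_, ?_⟩
    · intro g
      refine ⟨1, ?_⟩
      rw [pow_one]
      exact Subtype.ext (by simpa using hexp (g : Equiv.Perm Q) g.2)
    · rw [hcenter]
      exact le_top
  · rintro ⟨p, hp, hpg, -⟩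
    haveI : Fact p.Prime := ⟨hp⟩
    haveI := hpg.center_nontrivial
    exact (Subgroup.nontrivial_iff_ne_bot _).mp this
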